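/- Let X be a geometrically normal, geometrically integral, positive-dimensional projective variety over a field k. Then the underlying topological space |X| is uncountable if and only if the field k is uncountable. -/

import Mathlib

open AlgebraicGeometry CategoryTheory TopologicalSpace Limits

noncomputable section

universe u

set_option maxHeartbeats 1000000

attribute [instance] MvPolynomial.gradedAlgebra

/-- Projective `n`-space over `k`: `ℙⁿ_k = Proj k[x₀,…,xₙ]`, the `Proj` of the polynomial ring
in `n+1` variables with its standard grading by total degree. -/
def ProjectiveSpace (k : Type u) [CommRing k] (n : ℕ) : Scheme.{u} :=
  Proj (MvPolynomial.homogeneousSubmodule (Fin (n + 1)) k)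

/-- The structure morphism `ℙⁿ_k ⟶ Spec k`. -/
def ProjectiveSpace.structMap (k : Type u) [CommRing k] (n : ℕ) :
    ProjectiveSpace k n ⟶ Spec (CommRingCat.of k) :=
  Proj.toSpecZero _ ≫
    Spec.map (CommRingCat.ofHom
      (algebraMap k (MvPolynomial.homogeneousSubmodule (Fin (n + 1)) k 0)))

/-- `X`, with structure morphism `f : X ⟶ Spec k`, is a variety over the field `k`:
a separated scheme of finite type over `k`. -/
def IsVarietyOver (k : Type u) [Field k] {X : Scheme.{u}}
    (f : X ⟶ Spec (CommRingCat.of k)) : Prop :=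
  IsSeparated f ∧ LocallyOfFiniteType f ∧ QuasiCompact f

/-- `X` is projective over `k`: it admits a closed immersion over `k` into some `ℙⁿ_k`. -/
def IsProjectiveOver (k : Type u) [Field k] {X : Scheme.{u}}
    (f : X ⟶ Spec (CommRingCat.of k)) : Prop :=
  ∃ (n : ℕ) (ι : X ⟶ ProjectiveSpace k n),
    IsClosedImmersion ι ∧ ι ≫ ProjectiveSpace.structMap k n = f

/-- A scheme is normal if every stalk of its structure sheaf is an integrally closed domain. -/
def IsNormalScheme (X : Scheme.{u}) : Prop :=
  ∀ x : X, IsDomain (X.presheaf.stalk x) ∧ IsIntegrallyClosed (X.presheaf.stalk x)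

/-- The base change of `X` to an algebraic closure of `k`. -/
def geomBaseChange (k : Type u) [Field k] {X : Scheme.{u}}
    (f : X ⟶ Spec (CommRingCat.of k)) : Scheme.{u} :=
  pullback f (Spec.map (CommRingCat.ofHom (algebraMap k (AlgebraicClosure k))))

/-- `X` is geometrically integral over `k`: its base change to an algebraic closure of `k`
is an integral scheme. -/
def IsGeometricallyIntegralOver (k : Type u) [Field k] {X : Scheme.{u}}
    (f : X ⟶ Spec (CommRingCat.of k)) : Prop :=
  IsIntegral (geomBaseChange k f)

/-- `X` is geometrically normal over `k`: its base change to an algebraic closure of `k`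
is a normal scheme. -/
def IsGeometricallyNormalOver (k : Type u) [Field k] {X : Scheme.{u}}
    (f : X ⟶ Spec (CommRingCat.of k)) : Prop :=
  IsNormalScheme (geomBaseChange k f)

/-- Auxiliary: a countable noetherian commutative ring has countably many primes. -/
lemma aux_countable_primeSpectrum (R : Type u) [CommRing R] [Countable R]
    [IsNoetherianRing R] : Countable (PrimeSpectrum R) := by
  have h : ∀ p : PrimeSpectrum R, ∃ s : Finset R, Ideal.span (s : Set R) = p.asIdeal := fun p =>
    (isNoetherianRing_iff.mp ‹_›).noetherian p.asIdeal
  choose g hg using h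
  have hinj : Function.Injective g := fun p q hpq =>
    PrimeSpectrum.ext (by rw [← hg p, ← hg q, hpq])
  exact hinj.countable

open Cardinal in
/-- Auxiliary: a finite type domain over an uncountable field that is not a field has
uncountably many primes. -/
lemma aux_uncountable_primeSpectrum (k : Type u) [Field k] [Uncountable k]
    (B : Type u) [CommRing B] [IsDomain B] [Algebra k B] [hft : Algebra.FiniteType k B]
    (x : B) (hx0 : x ≠ 0) (hxu : ¬ IsUnit x) : Uncountable (PrimeSpectrum B) := by
  classical
  -- find a transcendental element
  obtain ⟨t, ht⟩ : ∃ t : B, ¬ IsIntegral k t := by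
    by_contra h
    push_neg at h
    haveI : Algebra.IsIntegral k B := ⟨h⟩
    have hB : IsField B := isField_of_isIntegral_of_isField' (Field.toIsField k)
    obtain ⟨y, hy⟩ := hB.mul_inv_cancel hx0
    exact hxu (IsUnit.of_mul_eq_one _ hy)
  have htr : Transcendental k t := fun halg => ht halg.isIntegral
  -- the set of `a` where `t - a` is a unit
  set S : Set k := {a : k | IsUnit (t - algebraMap k B a)} with hSdef
  have hS : ∀ a : ↥S, IsUnit (t - algebraMap k B a.1) := fun a => a.2
  set v : ↥S → B := fun a => (((hS a).unit)⁻¹ : Bˣ) with hvdef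
  have hv : ∀ a : ↥S, (t - algebraMap k B a.1) * v a = 1 := fun a => (hS a).mul_val_inv
  -- the inverses are linearly independent over k
  have hli : LinearIndependent k v := by
    rw [linearIndependent_iff']
    intro s g hsum i₀ hi₀
    have hprod : (∑ i ∈ s, g i • v i) * (∏ j ∈ s, (t - algebraMap k B j.1)) =
        ∑ i ∈ s, g i • ∏ j ∈ s.erase i, (t - algebraMap k B j.1) := by
      rw [Finset.sum_mul]
      refine Finset.sum_congr rfl fun i hi => ?_
      rw [smul_mul_assoc]
      congr 1
      rw [← Finset.mul_prod_erase s (fun j => (t - algebraMap k B j.1)) hi, ← mul_assoc,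
        mul_comm (v i) (t - algebraMap k B i.1), hv i, one_mul]
    have hzero : ∑ i ∈ s, g i • ∏ j ∈ s.erase i, (t - algebraMap k B j.1) = 0 := by
      rw [← hprod, hsum, zero_mul]
    set Q : Polynomial k :=
      ∑ i ∈ s, Polynomial.C (g i) * ∏ j ∈ s.erase i, (Polynomial.X - Polynomial.C j.1) with hQdef
    have hQ : Polynomial.aeval t Q = 0 := by
      rw [hQdef, map_sum, ← hzero]
      refine Finset.sum_congr rfl fun i hi => ?_
      rw [map_mul, map_prod, Polynomial.aeval_C, Algebra.smul_def]
      congr 1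
      refine Finset.prod_congr rfl fun j hj => ?_
      rw [map_sub, Polynomial.aeval_X, Polynomial.aeval_C]
    have hQ0 : Q = 0 := (transcendental_iff.mp htr) Q hQ
    have heval := congrArg (Polynomial.eval (i₀.1 : k)) hQ0
    rw [Polynomial.eval_zero, hQdef, Polynomial.eval_finset_sum,
      Finset.sum_eq_single i₀ ?h₁ ?h₂] at heval
    case h₁ =>
      intro b hb hbne
      rw [Polynomial.eval_mul, Polynomial.eval_prod,
        Finset.prod_eq_zero (Finset.mem_erase.mpr ⟨Ne.symm hbne, hi₀⟩) (by simp), mul_zero]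
    case h₂ =>
      intro h; exact absurd hi₀ h
    rw [Polynomial.eval_mul, Polynomial.eval_C, Polynomial.eval_prod] at heval
    simp only [Polynomial.eval_sub, Polynomial.eval_X, Polynomial.eval_C] at heval
    rcases mul_eq_zero.mp heval with h | h
    · exact h
    · exfalso
      refine (Finset.prod_ne_zero_iff.mpr ?_) h
      intro j hj
      exact sub_ne_zero.mpr fun hvp => (Finset.mem_erase.mp hj).1 (Subtype.ext hvp.symm)
  -- rank bound: B has countable dimension over k
  obtain ⟨n, gq, hgq⟩ := Algebra.FiniteType.iff_quotient_mvPolynomial''.mp hft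
  have hmv : Module.rank k (MvPolynomial (Fin n) k) ≤ ℵ₀ := by
    have hb := (MvPolynomial.basisMonomials (Fin n) k).mk_eq_rank
    have h1 : Cardinal.lift.{u} #((Fin n) →₀ ℕ) ≤ Cardinal.lift.{u} (ℵ₀ : Cardinal.{0}) :=
      Cardinal.lift_le.mpr Cardinal.mk_le_aleph0
    rw [hb] at h1
    simpa using h1
  have hrank : Module.rank k B ≤ ℵ₀ :=
    le_trans (LinearMap.rank_le_of_surjective gq.toLinearMap hgq) hmv
  have hcard : #(↥S) ≤ ℵ₀ := le_trans hli.cardinal_le_rank hrank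
  have hScnt : S.Countable := Set.countable_coe_iff.mp (Cardinal.mk_le_aleph0_iff.mp hcard)
  have hcompl : ¬ (Sᶜ : Set k).Countable := by
    intro h
    have hu := hScnt.union h
    rw [Set.union_compl_self] at hu
    exact not_countable (Set.countable_univ_iff.mp hu)
  haveI : Uncountable ↥(Sᶜ : Set k) :=
    not_countable_iff.mp (fun h => hcompl (Set.countable_coe_iff.mp h))
  -- choose a prime containing `t - a` for each `a` in the complement
  have hmax : ∀ a : ↥(Sᶜ : Set k), ∃ P : PrimeSpectrum B,
      t - algebraMap k B a.1 ∈ P.asIdeal := by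
    intro a
    have hnu : ¬ IsUnit (t - algebraMap k B a.1) := a.2
    obtain ⟨M, hM, hle⟩ := Ideal.exists_le_maximal (Ideal.span {t - algebraMap k B a.1})
      (by rwa [Ne, Ideal.span_singleton_eq_top])
    exact ⟨⟨M, hM.isPrime⟩, hle (Ideal.subset_span rfl)⟩
  choose gP hgP using hmax
  have hinj : Function.Injective gP := by
    intro a b hab
    by_contra hne
    have h1 := hgP a
    have h2 := hgP b
    rw [hab] at h1
    have hmem : algebraMap k B (a.1 - b.1) ∈ (gP b).asIdeal := by
      have := (gP b).asIdeal.sub_mem h2 h1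
      rwa [sub_sub_sub_cancel_left, ← map_sub] at this
    have hunit : IsUnit (algebraMap k B (a.1 - b.1)) :=
      (isUnit_iff_ne_zero.mpr (sub_ne_zero.mpr fun hvp =>
        hne (Subtype.ext hvp))).map (algebraMap k B)
    exact (gP b).isPrime.ne_top (Ideal.eq_top_of_isUnit_mem _ hmem hunit)
  exact hinj.uncountable

/-- Auxiliary: the ring of sections on an affine open of a scheme locally of finite type over a
field `k` is a finite type `k`-algebra (via some ring hom from `k`). -/
lemma aux_exists_finiteType_ring (k : Type u) [Field k] {X : Scheme.{u}}
    (f : X ⟶ Spec (CommRingCat.of k)) (hft : LocallyOfFiniteType f)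
    {U : X.Opens} (hU : IsAffineOpen U) :
    ∃ φ : k →+* Γ(X, U), φ.FiniteType := by
  have e : U ≤ f ⁻¹ᵁ ⊤ := le_top.trans (TopologicalSpace.Opens.map_top f.base).ge
  have hQ : RingHom.FiniteType (f.appLE ⊤ U e).hom :=
    HasRingHomProperty.appLE @LocallyOfFiniteType f hft
      ⟨⊤, isAffineOpen_top _⟩ ⟨U, hU⟩ e
  set eqv := (Scheme.ΓSpecIso (CommRingCat.of k)).commRingCatIsoToRingEquiv with heqv
  refine ⟨(f.appLE ⊤ U e).hom.comp eqv.symm.toRingHom, ?_⟩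
  exact hQ.comp (RingHom.FiniteType.of_surjective _ eqv.symm.surjective)

/-- For a geometrically normal, geometrically integral, positive-dimensional projective
variety `X` over a field `k`, the space `|X|` is uncountable iff `k` is uncountable. -/
theorem carrier_uncountable_iff_field_uncountable
    (k : Type u) [Field k] (X : Scheme.{u}) (f : X ⟶ Spec (CommRingCat.of k))
    (hvar : IsVarietyOver k f) (hproj : IsProjectiveOver k f)
    (hnorm : IsGeometricallyNormalOver k f) (hint : IsGeometricallyIntegralOver k f)
    (hdim : 1 ≤ topologicalKrullDim X) :
    Uncountable X ↔ Uncountable k := by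
  constructor
  · -- if |X| is uncountable then k is uncountable
    intro hX
    by_contra hk
    rw [not_uncountable_iff] at hk
    haveI := hvar.2.2
    haveI : CompactSpace X := (quasiCompact_iff_compactSpace f).mp hvar.2.2
    obtain ⟨s, hsfin, hsunion⟩ :=
      (isCompact_and_isOpen_iff_finite_and_eq_biUnion_affineOpens (U := (Set.univ : Set X))).mp
        ⟨isCompact_univ, isOpen_univ⟩
    have hcnt : ∀ i : X.affineOpens, (i : Set X).Countable := by
      intro i
      obtain ⟨φ, hφ⟩ := aux_exists_finiteType_ring k f hvar.2.1 i.2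
      letI : Algebra k Γ(X, i.1) := φ.toAlgebra
      haveI hFT : Algebra.FiniteType k Γ(X, i.1) := hφ
      haveI : Countable Γ(X, i.1) := by
        obtain ⟨n, g, hgs⟩ := Algebra.FiniteType.iff_quotient_mvPolynomial''.mp hFT
        haveI : Countable (MvPolynomial (Fin n) k) :=
          AddMonoidAlgebra.coeff_injective.countable
        exact hgs.countable
      haveI : IsNoetherianRing Γ(X, i.1) := Algebra.FiniteType.isNoetherianRing k _
      haveI : Countable (PrimeSpectrum Γ(X, i.1)) := aux_countable_primeSpectrum _
      haveI : Countable (Spec Γ(X, i.1)) :=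
        inferInstanceAs (Countable (PrimeSpectrum Γ(X, i.1)))
      rw [← i.2.range_fromSpec]
      exact Set.countable_range _
    have huniv : (Set.univ : Set X).Countable := by
      rw [hsunion]
      exact Set.Countable.biUnion hsfin.countable (fun i _ => hcnt i)
    exact not_countable (Set.countable_univ_iff.mp huniv)
  · -- if k is uncountable then |X| is uncountable
    intro hk
    classical
    -- extract a strict chain of irreducible closed subsets
    obtain ⟨T₀, T₁, hlt⟩ : ∃ a b : IrreducibleCloseds X, a < b := by
      by_contra h
      push_neg at h
      have h0 : Order.krullDim (IrreducibleCloseds X) ≤ 0 := by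
        refine iSup_le fun p => ?_
        have hp : p.length = 0 := by
          by_contra hl
          exact h _ _ (p.step ⟨0, Nat.pos_of_ne_zero hl⟩)
        simp [hp]
      exact absurd (le_trans hdim h0) (by decide)
    -- generic points
    have h₁ : IsIrreducible (T₁ : Set X) := T₁.isIrreducible'
    have h₀ : IsIrreducible (T₀ : Set X) := T₀.isIrreducible'
    set ξ₁ := h₁.genericPoint with hξ₁def
    set ξ₀ := h₀.genericPoint with hξ₀def
    have hcl₁ : closure ({ξ₁} : Set X) = (T₁ : Set X) := h₁.closure_genericPoint T₁.isClosed'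
    have hcl₀ : closure ({ξ₀} : Set X) = (T₀ : Set X) := h₀.closure_genericPoint T₀.isClosed'
    have hξ₀T₀ : ξ₀ ∈ (T₀ : Set X) := by rw [← hcl₀]; exact subset_closure rfl
    have hsub : (T₀ : Set X) ⊆ (T₁ : Set X) := hlt.le
    have hspec : ξ₁ ⤳ ξ₀ :=
      specializes_iff_mem_closure.mpr (by rw [hcl₁]; exact hsub hξ₀T₀)
    have hne : ξ₀ ≠ ξ₁ := by
      intro hEq
      exact hlt.ne (SetLike.coe_injective (by rw [← hcl₀, ← hcl₁, hEq]))
    -- an affine open containing both points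
    obtain ⟨_, ⟨U, hUaff, rfl⟩, hxU, -⟩ :=
      X.isBasis_affineOpens.exists_subset_of_mem_open (Set.mem_univ ξ₀) isOpen_univ
    have hξ₁U : ξ₁ ∈ (U : Set X) := hspec.mem_open U.isOpen hxU
    -- corresponding primes
    set p := hUaff.primeIdealOf ⟨ξ₁, hξ₁U⟩ with hpdef
    set q := hUaff.primeIdealOf ⟨ξ₀, hxU⟩ with hqdef
    have hfp : hUaff.fromSpec.base p = ξ₁ := hUaff.fromSpec_primeIdealOf ⟨ξ₁, hξ₁U⟩
    have hfq : hUaff.fromSpec.base q = ξ₀ := hUaff.fromSpec_primeIdealOf ⟨ξ₀, hxU⟩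
    haveI : IsOpenImmersion hUaff.fromSpec := IsAffineOpen.isOpenImmersion_fromSpec hUaff
    have hfinj : Function.Injective hUaff.fromSpec.base :=
      hUaff.fromSpec.isOpenEmbedding.injective
    have hspec2 : p ⤳ q := by
      apply (hUaff.fromSpec.isOpenEmbedding.isInducing.specializes_iff (x := p) (y := q)).mp
      rw [hfp, hfq]
      exact hspec
    have hple : p ≤ q := (PrimeSpectrum.le_iff_specializes p q).mpr hspec2
    have hpne : p ≠ q := fun hEq => hne (by rw [← hfp, ← hfq, hEq])
    have hplt : p.asIdeal < q.asIdeal :=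
      lt_of_le_of_ne ((PrimeSpectrum.asIdeal_le_asIdeal p q).mpr hple)
        (fun hEq => hpne (PrimeSpectrum.ext hEq))
    obtain ⟨sq, hsq, hsnp⟩ := SetLike.exists_of_lt hplt
    -- set up the finite type algebra structure
    obtain ⟨φ, hφ⟩ := aux_exists_finiteType_ring k f hvar.2.1 hUaff
    letI : Algebra k Γ(X, U) := φ.toAlgebra
    haveI hFT : Algebra.FiniteType k Γ(X, U) := hφ
    haveI hpp : p.asIdeal.IsPrime := p.isPrime
    haveI hqp : q.asIdeal.IsPrime := q.isPrime
    letI Bq : Type u := Γ(X, U) ⧸ p.asIdeal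
    haveI : IsDomain Bq := Ideal.Quotient.isDomain p.asIdeal
    haveI hFTB : Algebra.FiniteType k Bq :=
      Algebra.FiniteType.of_surjective (Ideal.Quotient.mkₐ k p.asIdeal)
        (Ideal.Quotient.mkₐ_surjective k _)
    -- a nonzero nonunit in the quotient
    set xq : Bq := Ideal.Quotient.mk p.asIdeal sq with hxqdef
    have hxq0 : xq ≠ 0 := fun hEq => hsnp (Ideal.Quotient.eq_zero_iff_mem.mp hEq)
    have hxqu : ¬ IsUnit xq := by
      intro hu
      obtain ⟨b, hb⟩ := hu.exists_right_inv
      obtain ⟨y, rfl⟩ := Ideal.Quotient.mk_surjective b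
      have hmem : sq * y - 1 ∈ p.asIdeal := by
        have : Ideal.Quotient.mk p.asIdeal (sq * y - 1) = 0 := by
          rw [map_sub, map_mul, map_one, ← hxqdef, hb, sub_self]
        exact Ideal.Quotient.eq_zero_iff_mem.mp this
      have h1 : (1 : Γ(X, U)) ∈ q.asIdeal := by
        have hsy : sq * y ∈ q.asIdeal := q.asIdeal.mul_mem_right y hsq
        have := q.asIdeal.sub_mem hsy (hplt.le hmem)
        simpa using this
      exact hqp.ne_top ((Ideal.eq_top_iff_one _).mpr h1)
    haveI hBu : Uncountable (PrimeSpectrum Bq) :=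
      aux_uncountable_primeSpectrum k Bq xq hxq0 hxqu
    -- chain of injections into X
    have hcominj : Function.Injective
        (PrimeSpectrum.comap (Ideal.Quotient.mk p.asIdeal) :
          PrimeSpectrum Bq → PrimeSpectrum Γ(X, U)) :=
      PrimeSpectrum.comap_injective_of_surjective _ Ideal.Quotient.mk_surjective
    have : Function.Injective (fun P : PrimeSpectrum Bq =>
        hUaff.fromSpec.base (PrimeSpectrum.comap (Ideal.Quotient.mk p.asIdeal) P)) :=
      fun a b hab => hcominj (hfinj hab)
    exact this.uncountable
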